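/- Assume a² + D² ≠ 0 and T = 0. A polynomial function W(x,y) = Σ_{0 ≤ i+j ≤ 2} α_{ij} x^i y^j of total degree at most two satisfies ∂W/∂x(x,y)·(−y) + ∂W/∂y(x,y)·(Dx − a) = 0 for all (x,y) ∈ ℝ² if and only if W(x,y) = λ + μ·(Dx² + y² − 2ax) for some real constants λ, μ. In other words, the space of quadratic inverse integrating factors is two-dimensional with basis {1, Dx² + y² − 2ax}. -/
import Mathlib


/-- A generic polynomial of total degree at most two in two variables,
`W(x,y) = Σ_{0 ≤ i+j ≤ 2} α_{ij} x^i y^j`. -/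
noncomputable def W (α₀₀ α₁₀ α₀₁ α₂₀ α₁₁ α₀₂ x y : ℝ) : ℝ :=
  α₀₀ + α₁₀ * x + α₀₁ * y + α₂₀ * x ^ 2 + α₁₁ * x * y + α₀₂ * y ^ 2

lemma derivW_x (α₀₀ α₁₀ α₀₁ α₂₀ α₁₁ α₀₂ x y : ℝ) :
    deriv (fun x' => W α₀₀ α₁₀ α₀₁ α₂₀ α₁₁ α₀₂ x' y) x = α₁₀ + 2 * α₂₀ * x + α₁₁ * y := by
  have h1 : HasDerivAt (fun x' : ℝ =>
      α₀₀ + α₁₀ * x' + α₀₁ * y + α₂₀ * x' ^ 2 + α₁₁ * x' * y + α₀₂ * y ^ 2)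
      (0 + α₁₀ * 1 + 0 + α₂₀ * ((2 : ℕ) * x ^ 1) + α₁₁ * 1 * y + 0) x :=
    (((((hasDerivAt_const x α₀₀).add ((hasDerivAt_id x).const_mul α₁₀)).add
      (hasDerivAt_const x (α₀₁ * y))).add ((hasDerivAt_pow 2 x).const_mul α₂₀)).add
      (((hasDerivAt_id x).const_mul α₁₁).mul_const y)).add (hasDerivAt_const x (α₀₂ * y ^ 2))
  have h : HasDerivAt (fun x' => W α₀₀ α₁₀ α₀₁ α₂₀ α₁₁ α₀₂ x' y)
      (α₁₀ + 2 * α₂₀ * x + α₁₁ * y) x := by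
    unfold W
    convert h1 using 1
    push_cast; ring
  exact h.deriv

lemma derivW_y (α₀₀ α₁₀ α₀₁ α₂₀ α₁₁ α₀₂ x y : ℝ) :
    deriv (fun y' => W α₀₀ α₁₀ α₀₁ α₂₀ α₁₁ α₀₂ x y') y = α₀₁ + α₁₁ * x + 2 * α₀₂ * y := by
  have h1 : HasDerivAt (fun y' : ℝ =>
      α₀₀ + α₁₀ * x + α₀₁ * y' + α₂₀ * x ^ 2 + α₁₁ * x * y' + α₀₂ * y' ^ 2)
      (0 + 0 + α₀₁ * 1 + 0 + α₁₁ * x * 1 + α₀₂ * ((2 : ℕ) * y ^ 1)) y :=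
    (((((hasDerivAt_const y α₀₀).add (hasDerivAt_const y (α₁₀ * x))).add
      ((hasDerivAt_id y).const_mul α₀₁)).add (hasDerivAt_const y (α₂₀ * x ^ 2))).add
      ((hasDerivAt_id y).const_mul (α₁₁ * x))).add ((hasDerivAt_pow 2 y).const_mul α₀₂)
  have h : HasDerivAt (fun y' => W α₀₀ α₁₀ α₀₁ α₂₀ α₁₁ α₀₂ x y')
      (α₀₁ + α₁₁ * x + 2 * α₀₂ * y) y := by
    unfold W
    convert h1 using 1
    push_cast; ring
  exact h.deriv

/-- For `a² + D² ≠ 0` and trace `T = 0`, a polynomial of degree at most two satisfies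
`∇W · L = 0` (with `L(x,y) = (−y, Dx − a)`) if and only if it is a linear combination
`λ + μ·(Dx² + y² − 2ax)`: the space of quadratic inverse integrating factors is
two-dimensional with basis `{1, Dx² + y² − 2ax}`. -/
theorem stmt_2 (a D : ℝ) (haD : a ^ 2 + D ^ 2 ≠ 0)
    (α₀₀ α₁₀ α₀₁ α₂₀ α₁₁ α₀₂ : ℝ) :
    (∀ x y : ℝ,
        deriv (fun x' => W α₀₀ α₁₀ α₀₁ α₂₀ α₁₁ α₀₂ x' y) x * (-y)
          + deriv (fun y' => W α₀₀ α₁₀ α₀₁ α₂₀ α₁₁ α₀₂ x y') y * (D * x - a)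
          = 0)
      ↔ ∃ lam mu : ℝ, ∀ x y : ℝ,
          W α₀₀ α₁₀ α₀₁ α₂₀ α₁₁ α₀₂ x y
            = lam + mu * (D * x ^ 2 + y ^ 2 - 2 * a * x) := by
  constructor
  · intro H
    have P : ∀ x y : ℝ, (α₁₀ + 2 * α₂₀ * x + α₁₁ * y) * (-y)
        + (α₀₁ + α₁₁ * x + 2 * α₀₂ * y) * (D * x - a) = 0 := by
      intro x y
      have := H x y
      rwa [derivW_x, derivW_y] at this
    have h00 := P 0 0
    have h10 := P 1 0
    have hm10 := P (-1) 0
    have h01 := P 0 1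
    have h0m1 := P 0 (-1)
    have h11 := P 1 1
    have e11 : α₁₁ = 0 := by linear_combination (-(h01 + h0m1)) / 2 + h00
    have eD : D * α₀₁ = 0 := by linear_combination (h10 - hm10) / 2 + a * e11
    have ea : a * α₀₁ = 0 := by linear_combination -h00
    have e01 : α₀₁ = 0 := by
      have h : α₀₁ * (a ^ 2 + D ^ 2) = 0 := by linear_combination a * ea + D * eD
      rcases mul_eq_zero.mp h with h' | h'
      · exact h'
      · exact absurd h' haD
    have e10 : α₁₀ + 2 * a * α₀₂ = 0 := by linear_combination (h0m1 - h01) / 2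
    have e20 : α₂₀ - D * α₀₂ = 0 := by
      linear_combination (-(h11 - h10 - h01 + h00)) / 2
    refine ⟨α₀₀, α₀₂, fun x y => ?_⟩
    unfold W
    linear_combination x * e10 + y * e01 + x ^ 2 * e20 + x * y * e11
  · rintro ⟨lam, mu, hW⟩
    have h00 := hW 0 0
    have h10 := hW 1 0
    have hm10 := hW (-1) 0
    have h01 := hW 0 1
    have h0m1 := hW 0 (-1)
    have h11 := hW 1 1
    unfold W at h00 h10 hm10 h01 h0m1 h11
    have e01 : α₀₁ = 0 := by linear_combination (h01 - h0m1) / 2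
    have e11 : α₁₁ = 0 := by linear_combination h11 - h10 - h01 + h00
    have e10 : α₁₀ = -2 * a * mu := by linear_combination (h10 - hm10) / 2
    have e20 : α₂₀ = D * mu := by linear_combination (h10 + hm10) / 2 - h00
    have e02 : α₀₂ = mu := by linear_combination (h01 + h0m1) / 2 - h00
    intro x y
    rw [derivW_x, derivW_y, e01, e11, e10, e20, e02]
    ring
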